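/- For every integer k ≥ 1, the Motzkin number M_{7^k - 1} is congruent to 2 modulo 7. -/

import Mathlib

open Finset

open PowerSeries

def motzkin (n : ℕ) : ℕ := ∑ k ∈ Finset.range (n + 1), n.choose (2 * k) * catalan k

lemma hockey (m p : ℕ) : ∑ i ∈ range m, i.choose p = m.choose (p+1) := by
  induction m with
  | zero => simp
  | succ m ih => rw [sum_range_succ, ih, Nat.choose_succ_succ' m p, Nat.add_comm]

lemma vander (n p q : ℕ) : ∑ i ∈ range (n+1), (i.choose p) * ((n-i).choose q)
    = (n+1).choose (p+q+1) := by
  induction n generalizing q with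
  | zero =>
    rw [show (0:ℕ)+1 = 1 from rfl, range_one, sum_singleton]
    rcases Nat.eq_zero_or_pos (p+q) with h | h
    · obtain ⟨rfl, rfl⟩ : p = 0 ∧ q = 0 := by omega
      simp
    · rw [Nat.choose_eq_zero_of_lt (by omega : (1:ℕ) < p+q+1)]
      rcases Nat.eq_zero_or_pos p with rfl | hp
      · rw [Nat.choose_eq_zero_of_lt (by omega : (0:ℕ) < q)]; simp
      · rw [Nat.choose_eq_zero_of_lt hp]; simp
  | succ n ih =>
    rcases Nat.eq_zero_or_pos q with rfl | hq
    · simp only [Nat.choose_zero_right, mul_one]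
      rw [hockey (n+2) p, Nat.add_zero]
    · obtain ⟨q, rfl⟩ := Nat.exists_eq_add_of_le hq
      rw [sum_range_succ]
      have step : ∀ i ∈ range (n+1), i.choose p * ((n+1-i).choose (1+q))
          = i.choose p * ((n-i).choose q) + i.choose p * ((n-i).choose (1+q)) := by
        intro i hi
        rw [mem_range] at hi
        rw [show n+1-i = (n-i)+1 by omega, show 1+q = q+1 by omega,
          Nat.choose_succ_succ' (n-i) q, Nat.mul_add]
      rw [Finset.sum_congr rfl step, Finset.sum_add_distrib, ih q, ih (1+q),
        Nat.sub_self, show Nat.succ 0 + q = q+1 from by omega, Nat.choose_zero_succ,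
        Nat.mul_zero, Nat.add_zero,
        show p + (q+1) + 1 = (p+q+1)+1 by omega,
        Nat.choose_succ_succ' (n+1) (p+q+1)]

lemma triangle_swap (N : ℕ) (g : ℕ → ℕ → ℕ) :
    ∑ k ∈ range N, ∑ i ∈ range (k+1), g i (k-i)
      = ∑ a ∈ range N, ∑ b ∈ range (N-a), g a b := by
  induction N with
  | zero => simp
  | succ N ih =>
    rw [sum_range_succ, ih]
    have h1 : ∀ a ∈ range (N+1), ∑ b ∈ range (N+1-a), g a b
        = ∑ b ∈ range (N-a), g a b + g a (N-a) := by
      intro a ha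
      rw [mem_range] at ha
      rw [show N+1-a = (N-a)+1 by omega, sum_range_succ]
    rw [Finset.sum_congr rfl h1, Finset.sum_add_distrib, sum_range_succ (fun a => ∑ b ∈ range (N-a), g a b)]
    rw [Nat.sub_self, range_zero, sum_empty, add_zero]

lemma motzkin_rec (n : ℕ) :
    motzkin (n+1) = motzkin n + ∑ i ∈ range n, motzkin i * motzkin (n-1-i) := by
  have step_a : motzkin (n+1) = motzkin n
      + ∑ k ∈ range (n+1), n.choose (2*k+1) * catalan (k+1) := by
    rw [motzkin, sum_range_succ']
    have h1 : ∀ k ∈ range (n+1), (n+1).choose (2*(k+1)) * catalan (k+1)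
        = n.choose (2*k+1) * catalan (k+1) + n.choose (2*(k+1)) * catalan (k+1) := by
      intro k hk
      rw [show 2*(k+1) = (2*k+1)+1 by ring, Nat.choose_succ_succ, Nat.add_mul]
    rw [Finset.sum_congr rfl h1, Finset.sum_add_distrib]
    have h2 : motzkin n = ∑ k ∈ range (n+1), n.choose (2*(k+1)) * catalan (k+1) + 1 := by
      rw [motzkin, sum_range_succ', sum_range_succ,
        Nat.choose_eq_zero_of_lt (by omega : n < 2*(n+1)), Nat.zero_mul, Nat.add_zero]
      simp
    rw [h2]
    simp [Nat.choose_zero_right, catalan_zero]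
    ring
  rw [step_a]
  congr 1
  -- case n = 0
  rcases n with _ | m
  · simp [Nat.choose_eq_zero_of_lt]
  -- n = m+1
  have hW : ∀ k ∈ range (m+2), (m+1).choose (2*k+1) * catalan (k+1)
      = ∑ i ∈ range (k+1), (m+1).choose (2*(i+(k-i))+1) * (catalan i * catalan (k-i)) := by
    intro k hk
    rw [catalan_succ, Fin.sum_univ_eq_sum_range (fun i => catalan i * catalan (k-i)), Finset.mul_sum]
    apply Finset.sum_congr rfl
    intro i hi
    rw [mem_range] at hi
    rw [show i + (k-i) = k by omega]
  rw [Finset.sum_congr rfl hW,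
    triangle_swap (m+2) (fun a b => (m+1).choose (2*(a+b)+1) * (catalan a * catalan b))]
  -- now RHS-of-T form; transform LHS (motzkin conv) to the same double sum
  have hM : ∀ i ∈ range (m+1), motzkin i * motzkin (m+1-1-i)
      = ∑ a ∈ range (m+2), ∑ b ∈ range (m+2), (i.choose (2*a) * ((m-i).choose (2*b))) * (catalan a * catalan b) := by
    intro i hi
    rw [mem_range] at hi
    have e1 : motzkin i = ∑ a ∈ range (m+2), i.choose (2*a) * catalan a := by
      rw [motzkin]
      apply Finset.sum_subset
      · intro a ha; rw [mem_range] at *; omega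
      · intro a _ ha
        rw [mem_range, not_lt] at ha
        rw [Nat.choose_eq_zero_of_lt (by omega), Nat.zero_mul]
    have e2 : motzkin (m+1-1-i) = ∑ b ∈ range (m+2), (m-i).choose (2*b) * catalan b := by
      rw [show m+1-1-i = m-i by omega, motzkin]
      apply Finset.sum_subset
      · intro b hb; rw [mem_range] at *; omega
      · intro b _ hb
        rw [mem_range, not_lt] at hb
        rw [Nat.choose_eq_zero_of_lt (by omega), Nat.zero_mul]
    rw [e1, e2, Finset.sum_mul_sum]
    apply Finset.sum_congr rfl; intro a _
    apply Finset.sum_congr rfl; intro b _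
    ring
  rw [Finset.sum_congr rfl hM]
  rw [Finset.sum_comm]
  apply Finset.sum_congr rfl
  intro a ha
  rw [Finset.sum_comm]
  have inner : ∀ b ∈ range (m+2), (∑ i ∈ range (m+1), i.choose (2*a) * ((m-i).choose (2*b)) * (catalan a * catalan b))
      = (m+1).choose (2*(a+b)+1) * (catalan a * catalan b) := by
    intro b _
    rw [← Finset.sum_mul, vander m (2*a) (2*b), show 2*a+2*b+1 = 2*(a+b)+1 by ring]
  rw [Finset.sum_congr rfl inner]
  apply Finset.sum_subset
  · intro b hb; simp only [mem_range] at hb ⊢; omega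
  · intro b hb hb2
    simp only [mem_range, not_lt] at ha hb hb2
    rw [Nat.choose_eq_zero_of_lt (by omega), Nat.zero_mul]

def uu : ℕ → ℤ
  | 0 => 1
  | 1 => -1
  | (n+2) => -2 * motzkin n

lemma motzkin_zero : motzkin 0 = 1 := by simp [motzkin]

lemma motzkin_one : motzkin 1 = 1 := by
  rw [motzkin, sum_range_succ, sum_range_succ, sum_range_zero]
  norm_num

lemma conv_u (n : ℕ) : ∑ i ∈ range (n+1), uu i * uu (n-i)
    = if n = 0 then 1 else if n = 1 then -2 else if n = 2 then -3 else 0 := by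
  match n with
  | 0 => simp [uu]
  | 1 => rw [sum_range_succ, sum_range_succ, sum_range_zero]; norm_num [uu]
  | 2 =>
    rw [sum_range_succ, sum_range_succ, sum_range_succ, sum_range_zero]
    norm_num [uu, motzkin_zero]
  | 3 =>
    rw [sum_range_succ, sum_range_succ, sum_range_succ, sum_range_succ, sum_range_zero]
    norm_num [uu, motzkin_zero, motzkin_one]
  | (m+4) =>
    rw [show m+4+1 = (m+3)+1+1 by omega, sum_range_succ, sum_range_succ,
      sum_range_succ', sum_range_succ']
    have h1 : ∀ i ∈ range (m+1), uu (i+1+1) * uu (m+4-(i+1+1))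
        = 4 * ((motzkin i : ℤ) * (motzkin (m-i) : ℤ)) := by
      intro i hi
      rw [mem_range] at hi
      rw [show m+4-(i+1+1) = (m-i)+2 by omega]
      show (-2 * (motzkin i:ℤ)) * (-2 * (motzkin (m-i):ℤ)) = _
      ring
    rw [Finset.sum_congr rfl h1, ← Finset.mul_sum]
    have h2 : uu 0 * uu (m+4-0) = -2 * motzkin (m+2) := by
      rw [show m+4-0 = (m+2)+2 by omega]; show 1 * (-2 * (motzkin (m+2):ℤ)) = _; ring
    have h3 : uu (0+1) * uu (m+4-(0+1)) = 2 * motzkin (m+1) := by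
      rw [show m+4-(0+1) = (m+1)+2 by omega]; show (-1) * (-2 * (motzkin (m+1):ℤ)) = _; ring
    have h4 : uu (m+3) * uu (m+4-(m+3)) = 2 * motzkin (m+1) := by
      rw [show m+4-(m+3) = 1 by omega, show m+3 = (m+1)+2 by omega]
      show (-2 * (motzkin (m+1):ℤ)) * (-1) = _; ring
    have h5 : uu (m+3+1) * uu (m+4-(m+3+1)) = -2 * motzkin (m+2) := by
      rw [show m+4-(m+3+1) = 0 by omega, show m+3+1 = (m+2)+2 by omega]
      show (-2 * (motzkin (m+2):ℤ)) * 1 = _; ring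
    rw [h2, h3, h4, h5]
    have hrec := motzkin_rec (m+1)
    rw [show m+1-1 = m by omega] at hrec
    have hS : (motzkin (m+2) : ℤ) = motzkin (m+1) + ∑ i ∈ range (m+1), (motzkin i : ℤ) * motzkin (m-i) := by
      rw [show m+1+1 = m+2 by omega] at hrec
      rw [hrec]
      push_cast
      ring
    rw [if_neg (by omega), if_neg (by omega), if_neg (by omega)]
    rw [hS]
    ring


instance : Fact (Nat.Prime 7) := ⟨by norm_num⟩

noncomputable section

def pp : Polynomial (ZMod 7) := Polynomial.C 1 + Polynomial.C 5 * Polynomial.X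
  + Polynomial.C 4 * Polynomial.X^2

lemma pp_coeff (m : ℕ) : pp.coeff m
    = if m = 0 then 1 else if m = 1 then 5 else if m = 2 then 4 else 0 := by
  unfold pp
  rcases m with _ | _ | _ | m <;>
    simp [Polynomial.coeff_one, Polynomial.coeff_X, Polynomial.coeff_X_pow]

lemma pp_natDegree : pp.natDegree = 2 := by
  unfold pp; compute_degree!

lemma pp_pow_natDegree (j : ℕ) : (pp ^ j).natDegree = 2 * j := by
  rw [Polynomial.natDegree_pow, pp_natDegree]; ring

lemma pp7 : pp ^ 7 = Polynomial.C 1 + Polynomial.C 5 * Polynomial.X^7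
    + Polynomial.C 4 * Polynomial.X^14 := by
  unfold pp
  rw [add_pow_char, add_pow_char, mul_pow, mul_pow, ← Polynomial.C_pow, ← Polynomial.C_pow,
    ← Polynomial.C_pow, show ((1:ZMod 7)^7) = 1 from by decide,
    show ((5:ZMod 7)^7) = 5 from by decide,
    show ((4:ZMod 7)^7) = 4 from by decide, ← pow_mul]

def q3 (r : ℕ) : ZMod 7 := (pp^3).coeff r

def rho : ℕ → ZMod 7
  | 0 => 1
  | (n+1) => rho ((n+1)/7) * q3 ((n+1)%7)
  decreasing_by exact Nat.div_lt_self (Nat.succ_pos n) (by norm_num)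

lemma pp_eval_zero : pp.eval 0 = 1 := by
  unfold pp; simp

lemma q3_zero : q3 0 = 1 := by
  unfold q3
  rw [Polynomial.coeff_zero_eq_eval_zero, Polynomial.eval_pow, pp_eval_zero, one_pow]

lemma rho_eq (n : ℕ) (h : n ≠ 0) : rho n = rho (n/7) * q3 (n%7) := by
  rcases n with _ | n
  · exact absurd rfl h
  · rw [rho]

def pull (F : PowerSeries (ZMod 7)) : PowerSeries (ZMod 7) :=
  PowerSeries.mk fun n => if n % 7 = 0 then PowerSeries.coeff (n/7) F else 0

lemma coeff_pull (F : PowerSeries (ZMod 7)) (n : ℕ) :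
    PowerSeries.coeff n (pull F) = if n % 7 = 0 then PowerSeries.coeff (n/7) F else 0 :=
  coeff_mk n _

lemma sum_range_mul7 (f : ℕ → ZMod 7) (h : ∀ i, i % 7 ≠ 0 → f i = 0) (m : ℕ) :
    ∑ i ∈ range (7*m+1), f i = ∑ j ∈ range (m+1), f (7*j) := by
  induction m with
  | zero => simp
  | succ m ih =>
    rw [show 7*(m+1)+1 = (7*m+1)+1+1+1+1+1+1+1 by ring, sum_range_succ, sum_range_succ,
      sum_range_succ, sum_range_succ, sum_range_succ, sum_range_succ, sum_range_succ, ih,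
      h (7*m+1) (by omega), h (7*m+1+1) (by omega), h (7*m+1+1+1) (by omega),
      h (7*m+1+1+1+1) (by omega), h (7*m+1+1+1+1+1) (by omega), h (7*m+1+1+1+1+1+1) (by omega),
      sum_range_succ _ (m+1), show 7*m+1+1+1+1+1+1+1 = 7*(m+1) by ring]
    ring

lemma pull_mul (F G : PowerSeries (ZMod 7)) : pull F * pull G = pull (F * G) := by
  ext n
  rw [PowerSeries.coeff_mul, Finset.Nat.sum_antidiagonal_eq_sum_range_succ_mk, coeff_pull]
  by_cases h7 : n % 7 = 0
  · rw [if_pos h7]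
    obtain ⟨m, rfl⟩ : ∃ m, n = 7*m := ⟨n/7, by omega⟩
    have collapse := sum_range_mul7
      (fun i => PowerSeries.coeff i (pull F) * PowerSeries.coeff (7*m-i) (pull G))
      (fun i hi => by simp only [coeff_pull, if_neg hi, zero_mul]) m
    rw [collapse]
    rw [PowerSeries.coeff_mul, Finset.Nat.sum_antidiagonal_eq_sum_range_succ_mk,
      show 7*m/7 = m by omega]
    apply Finset.sum_congr rfl
    intro j hj
    rw [mem_range] at hj
    rw [coeff_pull, coeff_pull, if_pos (by omega), if_pos (by omega),
      show 7*j/7 = j by omega, show (7*m-7*j)/7 = m - j by omega]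
  · rw [if_neg h7]
    apply Finset.sum_eq_zero
    intro i hi
    rw [mem_range] at hi
    by_cases hi7 : i % 7 = 0
    · rw [coeff_pull (G), if_neg (by omega), mul_zero]
    · rw [coeff_pull F, if_neg hi7, zero_mul]

def R : PowerSeries (ZMod 7) := PowerSeries.mk rho

lemma R_eq : R = pull R * (pp^3 : Polynomial (ZMod 7)) := by
  ext n
  rw [PowerSeries.coeff_mul, Finset.Nat.sum_antidiagonal_eq_sum_range_succ_mk]
  have key : ∀ i ∈ range (n+1),
      PowerSeries.coeff i (pull R) * PowerSeries.coeff (n-i) ((pp^3 : Polynomial (ZMod 7)) : PowerSeries (ZMod 7))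
      = if i = n - n % 7 then rho (n/7) * q3 (n%7) else 0 := by
    intro i hi
    rw [mem_range] at hi
    rw [coeff_pull, Polynomial.coeff_coe]
    by_cases hi7 : i % 7 = 0
    · by_cases hin : i = n - n % 7
      · rw [if_pos hi7, if_pos hin, show i/7 = n/7 by omega, show n - i = n % 7 by omega,
          R, coeff_mk]
        rfl
      · rw [if_pos hi7, if_neg hin,
          Polynomial.coeff_eq_zero_of_natDegree_lt (by rw [pp_pow_natDegree]; omega), mul_zero]
    · rw [if_neg hi7, zero_mul, if_neg (by omega)]
  rw [Finset.sum_congr rfl key, Finset.sum_ite_eq' (range (n+1)) (n - n % 7)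
    (fun _ => rho (n/7) * q3 (n%7)), if_pos (by rw [mem_range]; omega)]
  rw [R, coeff_mk]
  rcases Nat.eq_zero_or_pos n with rfl | hn
  · rw [show (0:ℕ)/7 = 0 from rfl, show (0:ℕ)%7 = 0 from rfl, q3_zero, mul_one]
  · exact rho_eq n (by omega)

lemma pull_pp : pull ((pp : Polynomial (ZMod 7)) : PowerSeries (ZMod 7))
    = ((pp^7 : Polynomial (ZMod 7)) : PowerSeries (ZMod 7)) := by
  ext n
  rw [coeff_pull, Polynomial.coeff_coe, Polynomial.coeff_coe, pp7]
  simp only [Polynomial.coeff_add, Polynomial.coeff_C_mul, Polynomial.coeff_X_pow,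
    Polynomial.coeff_C, pp_coeff]
  rcases eq_or_ne n 0 with rfl | h0
  · norm_num
  rcases eq_or_ne n 7 with rfl | h7
  · norm_num
  rcases eq_or_ne n 14 with rfl | h14
  · norm_num
  rw [if_neg h0, if_neg h7, if_neg h14]
  by_cases hm : n % 7 = 0
  · rw [if_pos hm, if_neg (by omega), if_neg (by omega), if_neg (by omega)]
    norm_num
  · rw [if_neg hm]
    norm_num

lemma coe3 : ((pp^3 : Polynomial (ZMod 7)) : PowerSeries (ZMod 7)) = (pp : PowerSeries (ZMod 7))^3 := by
  norm_cast
lemma coe4 : ((pp^4 : Polynomial (ZMod 7)) : PowerSeries (ZMod 7)) = (pp : PowerSeries (ZMod 7))^4 := by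
  norm_cast
lemma coe7 : ((pp^7 : Polynomial (ZMod 7)) : PowerSeries (ZMod 7)) = (pp : PowerSeries (ZMod 7))^7 := by
  norm_cast

lemma V_pull : R * R * (pp : PowerSeries (ZMod 7))
    = pull (R * R * (pp : PowerSeries (ZMod 7))) := by
  have step : R * R * (pp : PowerSeries (ZMod 7))
      = pull R * pull R * ((pp^7 : Polynomial (ZMod 7)) : PowerSeries (ZMod 7)) := by
    nth_rewrite 1 [R_eq]
    nth_rewrite 2 [R_eq]
    rw [coe3, coe7]
    ring
  calc R * R * (pp : PowerSeries (ZMod 7))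
      = pull R * pull R * ((pp^7 : Polynomial (ZMod 7)) : PowerSeries (ZMod 7)) := step
    _ = pull R * pull R * pull (pp : PowerSeries (ZMod 7)) := by rw [← pull_pp]
    _ = pull (R * R * (pp : PowerSeries (ZMod 7))) := by rw [pull_mul, pull_mul]

lemma constCoeff_R : PowerSeries.constantCoeff R = 1 := by
  rw [R, ← PowerSeries.coeff_zero_eq_constantCoeff, coeff_mk]
  simp [rho]

lemma constCoeff_pp : PowerSeries.constantCoeff ((pp : Polynomial (ZMod 7)) : PowerSeries (ZMod 7)) = 1 := by
  rw [Polynomial.constantCoeff_coe, pp_coeff]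
  norm_num

lemma V_one : R * R * (pp : PowerSeries (ZMod 7)) = 1 := by
  ext n
  induction n using Nat.strong_induction_on with
  | _ n ih =>
    rcases Nat.eq_zero_or_pos n with rfl | hn
    · rw [PowerSeries.coeff_zero_eq_constantCoeff, map_mul, map_mul, constCoeff_R, constCoeff_pp,
        map_one]
      norm_num
    · conv_lhs => rw [V_pull]
      rw [coeff_pull, PowerSeries.coeff_one, if_neg (by omega : ¬ n = 0)]
      by_cases hm : n % 7 = 0
      · rw [if_pos hm, ih (n/7) (Nat.div_lt_self hn (by norm_num)),
          PowerSeries.coeff_one, if_neg (by omega : ¬ n/7 = 0)]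
      · rw [if_neg hm]

lemma pull_one : pull (1 : PowerSeries (ZMod 7)) = 1 := by
  ext n
  rw [coeff_pull, PowerSeries.coeff_one, PowerSeries.coeff_one]
  by_cases hm : n % 7 = 0
  · rw [if_pos hm]
    by_cases h0 : n = 0
    · rw [if_pos (by omega), if_pos h0]
    · rw [if_neg (by omega), if_neg h0]
  · rw [if_neg hm, if_neg (by omega)]

def U : PowerSeries (ZMod 7) := PowerSeries.mk fun n => ((uu n : ℤ) : ZMod 7)

lemma U_sq : U * U = ((pp : Polynomial (ZMod 7)) : PowerSeries (ZMod 7)) := by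
  ext n
  rw [PowerSeries.coeff_mul, Finset.Nat.sum_antidiagonal_eq_sum_range_succ_mk,
    Polynomial.coeff_coe, pp_coeff]
  simp only [U, coeff_mk]
  rw [show (∑ i ∈ range (n+1), (((uu i : ℤ) : ZMod 7) * ((uu (n-i) : ℤ) : ZMod 7)))
    = (((∑ i ∈ range (n+1), uu i * uu (n-i) : ℤ)) : ZMod 7) by push_cast; ring]
  rw [conv_u n]
  split_ifs <;> decide

def S : PowerSeries (ZMod 7) := pull R * ((pp^4 : Polynomial (ZMod 7)) : PowerSeries (ZMod 7))

lemma S_sq : S * S = ((pp : Polynomial (ZMod 7)) : PowerSeries (ZMod 7)) := by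
  have step : S * S = pull (R * R * (pp : PowerSeries (ZMod 7))) * (pp : PowerSeries (ZMod 7)) := by
    rw [S, ← pull_mul, ← pull_mul, coe4]
    have h8 : (pp : PowerSeries (ZMod 7))^4 * (pp : PowerSeries (ZMod 7))^4
        = ((pp^7 : Polynomial (ZMod 7)) : PowerSeries (ZMod 7)) * (pp : PowerSeries (ZMod 7)) := by
      rw [coe7]; ring
    rw [mul_assoc, mul_comm ((pp:PowerSeries (ZMod 7))^4), mul_assoc, ← mul_assoc, h8, ← pull_pp]
    ring
  rw [step, V_one, pull_one, one_mul]

lemma U_eq_S : U = S := by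
  have hz : (U - S) * (U + S) = 0 := by linear_combination U_sq - S_sq
  rcases mul_eq_zero.mp hz with h | h
  · exact sub_eq_zero.mp h
  · exfalso
    have hc := congrArg (PowerSeries.constantCoeff (R := ZMod 7)) h
    rw [map_add, map_zero] at hc
    have h1 : PowerSeries.constantCoeff U = 1 := by
      rw [U, ← PowerSeries.coeff_zero_eq_constantCoeff, coeff_mk]
      rfl
    have h2 : PowerSeries.constantCoeff S = 1 := by
      rw [S, map_mul, coe4, map_pow, constCoeff_pp, one_pow, mul_one,
        ← PowerSeries.coeff_zero_eq_constantCoeff, coeff_pull, if_pos (by norm_num),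
        show (0:ℕ)/7 = 0 from rfl, R, coeff_mk]
      simp [rho]
    rw [h1, h2] at hc
    revert hc
    decide

lemma pp_leadingCoeff : pp.leadingCoeff = 4 := by
  rw [Polynomial.leadingCoeff, pp_natDegree, pp_coeff]
  norm_num

lemma q3_six : q3 6 = 1 := by
  unfold q3
  rw [show (6:ℕ) = (pp^3).natDegree from by rw [pp_pow_natDegree],
    Polynomial.coeff_natDegree, Polynomial.leadingCoeff_pow, pp_leadingCoeff]
  decide

lemma rho_zero : rho 0 = 1 := by simp [rho]

lemma rho_pow_seven (j : ℕ) : rho (7^j) = rho 1 := by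
  induction j with
  | zero => rfl
  | succ j ih =>
    have h7 : (7:ℕ)^(j+1) = 7 * 7^j := by rw [pow_succ]; ring
    have hj : 1 ≤ (7:ℕ)^j := Nat.one_le_pow _ _ (by norm_num)
    rw [rho_eq (7^(j+1)) (by omega), show 7^(j+1)/7 = 7^j from by omega,
      show 7^(j+1)%7 = 0 from by omega, q3_zero, mul_one, ih]

lemma rho_pow_seven_sub_one (j : ℕ) : rho (7^j - 1) = 1 := by
  induction j with
  | zero => exact rho_zero
  | succ j ih =>
    have h7 : (7:ℕ)^(j+1) = 7 * 7^j := by rw [pow_succ]; ring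
    have hj : 1 ≤ (7:ℕ)^j := Nat.one_le_pow _ _ (by norm_num)
    rw [rho_eq _ (by omega), show (7^(j+1)-1)/7 = 7^j - 1 from by omega,
      show (7^(j+1)-1)%7 = 6 from by omega, ih, q3_six, mul_one]

lemma coeff_S_extract (n : ℕ) (h1 : n % 7 = 1) (h8 : 8 ≤ n) :
    PowerSeries.coeff n S
      = rho (n/7) * (pp^4).coeff 1 + rho (n/7 - 1) * (pp^4).coeff 8 := by
  rw [S, PowerSeries.coeff_mul, Finset.Nat.sum_antidiagonal_eq_sum_range_succ_mk]
  have hsub : ({n-1, n-8} : Finset ℕ) ⊆ range (n+1) := by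
    intro x hx
    simp only [Finset.mem_insert, Finset.mem_singleton] at hx
    rw [mem_range]
    omega
  have hzero : ∀ x ∈ range (n+1), x ∉ ({n-1, n-8} : Finset ℕ) →
      PowerSeries.coeff x (pull R)
        * PowerSeries.coeff (n-x) ((pp^4 : Polynomial (ZMod 7)) : PowerSeries (ZMod 7)) = 0 := by
    intro x hx hx2
    simp only [Finset.mem_insert, Finset.mem_singleton, not_or] at hx2
    rw [mem_range] at hx
    by_cases h7 : x % 7 = 0
    · rw [Polynomial.coeff_coe,
        Polynomial.coeff_eq_zero_of_natDegree_lt (by rw [pp_pow_natDegree]; omega), mul_zero]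
    · rw [coeff_pull, if_neg h7, zero_mul]
  rw [← Finset.sum_subset hsub hzero, Finset.sum_pair (by omega : n-1 ≠ n-8)]
  rw [show n-(n-1) = 1 by omega, show n-(n-8) = 8 by omega, coeff_pull, coeff_pull,
    if_pos (by omega : (n-1) % 7 = 0), if_pos (by omega : (n-8) % 7 = 0),
    show (n-1)/7 = n/7 by omega, show (n-8)/7 = n/7-1 by omega,
    Polynomial.coeff_coe, Polynomial.coeff_coe]
  simp [R, coeff_mk]

lemma catalan_four : catalan 4 = 14 := by
  rw [show (4:ℕ) = 3+1 from rfl, catalan_succ]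
  simp [Fin.sum_univ_succ, catalan_two, catalan_three]

lemma catalan_five : catalan 5 = 42 := by
  rw [show (5:ℕ) = 4+1 from rfl, catalan_succ]
  simp [Fin.sum_univ_succ, catalan_two, catalan_three, catalan_four]

lemma catalan_six : catalan 6 = 132 := by
  rw [show (6:ℕ) = 5+1 from rfl, catalan_succ]
  simp [Fin.sum_univ_succ, catalan_two, catalan_three, catalan_four, catalan_five]

lemma motzkin_six : motzkin 6 = 51 := by
  rw [motzkin, sum_range_succ, sum_range_succ, sum_range_succ, sum_range_succ, sum_range_succ,
    sum_range_succ, sum_range_succ, sum_range_zero, catalan_two, catalan_three, catalan_four,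
    catalan_five, catalan_six, catalan_zero, catalan_one]
  decide

lemma coeff_U (n : ℕ) : PowerSeries.coeff (n+2) U = ((-2 * motzkin n : ℤ) : ZMod 7) := by
  rw [U, coeff_mk]
  rfl

end

theorem motzkin_7k_sub_one_mod_seven (k : ℕ) (hk : 1 ≤ k) :
    motzkin (7 ^ k - 1) % 7 = 2 := by
  have h7k : (7:ℕ)^k = 7 * 7^(k-1) := by
    conv_lhs => rw [show k = (k-1)+1 by omega, pow_succ]
    ring
  have hj : 1 ≤ (7:ℕ)^(k-1) := Nat.one_le_pow _ _ (by norm_num)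
  have e1 : ((-2 * motzkin (7^k-1) : ℤ) : ZMod 7)
      = rho 1 * (pp^4).coeff 1 + (pp^4).coeff 8 := by
    rw [← coeff_U, U_eq_S, show (7^k-1)+2 = 7^k+1 by omega,
      coeff_S_extract (7^k+1) (by omega) (by omega),
      show (7^k+1)/7 = 7^(k-1) by omega,
      rho_pow_seven (k-1), rho_pow_seven_sub_one (k-1), one_mul]
  have e2 : ((-2 * motzkin 6 : ℤ) : ZMod 7)
      = rho 1 * (pp^4).coeff 1 + (pp^4).coeff 8 := by
    rw [← coeff_U, U_eq_S, show (6:ℕ)+2 = 8 from rfl,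
      coeff_S_extract 8 (by norm_num) (le_refl 8),
      show (8:ℕ)/7 = 1 from rfl, show (1:ℕ)-1 = 0 from rfl, rho_zero, one_mul]
  have e3 : ((motzkin (7^k-1) : ℕ) : ZMod 7) = ((motzkin 6 : ℕ) : ZMod 7) := by
    have h := e1.trans e2.symm
    push_cast at h
    exact mul_left_cancel₀ (show (-2 : ZMod 7) ≠ 0 by decide) h
  rw [motzkin_six] at e3
  have := (ZMod.natCast_eq_natCast_iff' _ _ _).mp e3
  simpa using this
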